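/- Let a and b be Laurent polynomials over ℂ having symmetry with types ε_a z^{c_a} and ε_b z^{c_b}, and suppose b ≠ 0 and len(a) > len(b). Then there exists a Laurent polynomial q having symmetry with type ε_aε_b z^{c_a−c_b} such that a₁(z) := a(z) − b(z)q(z) has symmetry with type ε_a z^{c_a} and len(a₁) < len(a). -/

import Mathlib

open LaurentPolynomial Matrix
open scoped Classical

noncomputable section

abbrev LP := LaurentPolynomial ℂ

namespace QT

/-- The coefficient of `z^k` in a Laurent polynomial. -/
def coeff (u : LP) (k : ℤ) : ℂ := (AddMonoidAlgebra.coeff u) k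

/-- The Hermitian conjugate `u⋆(z) = Σ conj(u(k)) z^{-k}`. -/
def hstar (u : LP) : LP :=
  AddMonoidAlgebra.ofCoeff (
    Finsupp.mapDomain (fun k => -k)
      (Finsupp.mapRange (starRingEnd ℂ) (map_zero _) (AddMonoidAlgebra.coeff u)))

/-- `u` has symmetry with type `ε z^c`, i.e. `u(k) = ε u(c-k)` for all `k`. -/
def SymT (u : LP) (ε : ℂ) (c : ℤ) : Prop := ∀ k : ℤ, coeff u k = ε * coeff u (c - k)

def Sgn (ε : ℂ) : Prop := ε = 1 ∨ ε = -1

/-- `u` has symmetry (with some type). -/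
def HasSym (u : LP) : Prop := ∃ ε c, Sgn ε ∧ SymT u ε c

/-- The Laurent polynomial `z - a`. -/
def zsub (a : ℂ) : LP := T 1 - LaurentPolynomial.C a

/-- `m` is the multiplicity of `z₀` as a zero of `u`. -/
def mzIs (u : LP) (z₀ : ℂ) (m : ℕ) : Prop := zsub z₀ ^ m ∣ u ∧ ¬ zsub z₀ ^ (m + 1) ∣ u

/-- The multiplicity of `z₀` as a zero of `u`, as a function. -/
def mzF (u : LP) (z₀ : ℂ) : ℕ := sSup {m : ℕ | zsub z₀ ^ m ∣ u}

/-- The difference-of-(Hermitian)-squares property with respect to symmetry type `ε z^c`. -/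
def DOS (u : LP) (ε : ℂ) (c : ℤ) : Prop :=
  ∃ (u₁ u₂ : LP) (ε₁ ε₂ : ℂ) (c₁ c₂ : ℤ),
    Sgn ε₁ ∧ Sgn ε₂ ∧ SymT u₁ ε₁ c₁ ∧ SymT u₂ ε₂ c₂ ∧
    u₁ * hstar u₁ - u₂ * hstar u₂ = u ∧ ε₁ * ε₂ = ε ∧ c₁ - c₂ = c

/-- Degree: the largest exponent with nonzero coefficient (0 for the zero polynomial). -/
def degL (u : LP) : ℤ :=
  if h : u = 0 then 0
  else (AddMonoidAlgebra.coeff u).support.max'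
    (Finsupp.support_nonempty_iff.mpr (fun h' => h (AddMonoidAlgebra.coeff_injective h')))

/-- Lower degree: the smallest exponent with nonzero coefficient (0 for zero). -/
def ldegL (u : LP) : ℤ :=
  if h : u = 0 then 0
  else (AddMonoidAlgebra.coeff u).support.min'
    (Finsupp.support_nonempty_iff.mpr (fun h' => h (AddMonoidAlgebra.coeff_injective h')))

/-- Length `deg - ldeg`, with `len 0 = ⊥`. -/
def lenL (u : LP) : WithBot ℤ := if u = 0 then ⊥ else ((degL u - ldegL u : ℤ) : WithBot ℤ)

/-- `g` is a greatest common divisor of `a` and `b`. -/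
def IsGCD2 (g a b : LP) : Prop := g ∣ a ∧ g ∣ b ∧ ∀ e : LP, e ∣ a → e ∣ b → e ∣ g

/-- `g` is a greatest common divisor of `a`, `b`, `c`, `d`. -/
def IsGCD4 (g a b c d : LP) : Prop :=
  g ∣ a ∧ g ∣ b ∧ g ∣ c ∧ g ∣ d ∧ ∀ e : LP, e ∣ a → e ∣ b → e ∣ c → e ∣ d → e ∣ g

/-- The Hermitian conjugate transpose of a matrix of Laurent polynomials. -/
def hstarM (A : Matrix (Fin 2) (Fin 2) LP) : Matrix (Fin 2) (Fin 2) LP :=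
  fun i j => hstar (A j i)

def IsHerm (A : Matrix (Fin 2) (Fin 2) LP) : Prop := hstarM A = A

/-- `diag(1, -1)`. -/
def Jmat : Matrix (Fin 2) (Fin 2) LP := Matrix.diagonal ![1, -1]

/-- A square matrix of Laurent polynomials is strongly invertible if its determinant is a
nonzero monomial. -/
def StrongInv (A : Matrix (Fin 2) (Fin 2) LP) : Prop :=
  ∃ (lam : ℂ) (k : ℤ), lam ≠ 0 ∧ A.det = LaurentPolynomial.C lam * T k

/-- Compatible symmetry for a `2×2` matrix of Laurent polynomials. -/
def CompatSym (A : Matrix (Fin 2) (Fin 2) LP) : Prop :=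
  ∃ (ε ε' : Fin 2 → ℂ) (c c' : Fin 2 → ℤ),
    (∀ j, Sgn (ε j)) ∧ (∀ k, Sgn (ε' k)) ∧
    ∀ j k, SymT (A j k) (ε j * ε' k) (c' k - c j)

/-- Substitution `z ↦ z²`. -/
def sqDom (u : LP) : LP :=
  AddMonoidAlgebra.ofCoeff (Finsupp.mapDomain (fun k => 2 * k) (AddMonoidAlgebra.coeff u))

/-- Substitution `z ↦ -z`. -/
def negSub (u : LP) : LP :=
  (AddMonoidAlgebra.coeff u).sum fun k c => AddMonoidAlgebra.ofCoeff (Finsupp.single k ((-1 : ℂ) ^ k * c))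

/-- The `γ`-coset `u^{[γ]}(z) = Σ_k u(γ + 2k) z^k`. -/
def cosetL (u : LP) (γ : ℤ) : LP :=
  AddMonoidAlgebra.ofCoeff (
    Finsupp.comapDomain (fun k : ℤ => γ + 2 * k) (AddMonoidAlgebra.coeff u)
      (by intro a _ b _ h; simp only at h; omega))

/-- Evaluation of a Laurent polynomial at a point. -/
def evalL (u : LP) (z : ℂ) : ℂ := (AddMonoidAlgebra.coeff u).sum fun k c => c * z ^ k

/-- `{a; b₁, b₂}_{Θ,(1,-1)}` is a quasi-tight framelet filter bank. -/
def QTFB (a Θ b₁ b₂ : LP) : Prop :=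
  sqDom Θ * hstar a * a + hstar b₁ * b₁ - hstar b₂ * b₂ = Θ ∧
  sqDom Θ * hstar a * negSub a + hstar b₁ * negSub b₁ - hstar b₂ * negSub b₂ = 0

/-- The matrix `N_{a,Θ|n_b}` built from the quotients `A`, `B`. -/
def Nmat (A B : LP) : Matrix (Fin 2) (Fin 2) LP :=
  LaurentPolynomial.C (2 : ℂ)⁻¹ •
    !![cosetL A 0 + cosetL B 0, cosetL A 1 - cosetL B 1;
       T 1 * (cosetL A 1 + cosetL B 1), cosetL A 0 - cosetL B 0]

-- aux lemmas
lemma sgn_ne {ε : ℂ} (h : Sgn ε) : ε ≠ 0 := by rcases h with rfl|rfl <;> norm_num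
lemma sgn_sq {ε : ℂ} (h : Sgn ε) : ε * ε = 1 := by rcases h with rfl|rfl <;> norm_num

lemma coeff_deg_ne_zero {u : LP} (h : u ≠ 0) : coeff u (degL u) ≠ 0 := by
  rw [degL, dif_neg h]
  exact Finsupp.mem_support_iff.mp (Finset.max'_mem _ _)

lemma coeff_ldeg_ne_zero {u : LP} (h : u ≠ 0) : coeff u (ldegL u) ≠ 0 := by
  rw [ldegL, dif_neg h]
  exact Finsupp.mem_support_iff.mp (Finset.min'_mem _ _)

lemma le_degL {u : LP} (h : u ≠ 0) {k : ℤ} (hk : coeff u k ≠ 0) : k ≤ degL u := by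
  rw [degL, dif_neg h]
  exact Finset.le_max' _ _ (Finsupp.mem_support_iff.mpr hk)

lemma ldegL_le {u : LP} (h : u ≠ 0) {k : ℤ} (hk : coeff u k ≠ 0) : ldegL u ≤ k := by
  rw [ldegL, dif_neg h]
  exact Finset.min'_le _ _ (Finsupp.mem_support_iff.mpr hk)

lemma coeff_eq_zero_of_degL_lt {u : LP} {k : ℤ} (h : degL u < k) : coeff u k = 0 := by
  by_cases h0 : u = 0
  · subst h0; simp [coeff]
  · by_contra hk; exact absurd (le_degL h0 hk) (not_le.mpr h)

lemma coeff_eq_zero_of_lt_ldegL {u : LP} {k : ℤ} (h : k < ldegL u) : coeff u k = 0 := by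
  by_cases h0 : u = 0
  · subst h0; simp [coeff]
  · by_contra hk; exact absurd (ldegL_le h0 hk) (not_le.mpr h)

lemma coeff_sub (u v : LP) (k : ℤ) : coeff (u - v) k = coeff u k - coeff v k := by
  unfold coeff; rw [AddMonoidAlgebra.coeff_sub, Finsupp.sub_apply]

/-- one step of length reduction for Laurent polynomials with symmetry
(Lemma 3.4 of the paper). -/
theorem length_reduction_step
    (a b : LP) (εa εb : ℂ) (ca cb : ℤ) (hεa : Sgn εa) (hεb : Sgn εb)
    (ha : SymT a εa ca) (hb : SymT b εb cb) (hb0 : b ≠ 0) (hlen : lenL b < lenL a) :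
    ∃ q : LP, SymT q (εa * εb) (ca - cb) ∧
      SymT (a - b * q) εa ca ∧ lenL (a - b * q) < lenL a := by
  have ha0 : a ≠ 0 := by
    rintro rfl
    simp only [lenL, if_pos rfl] at hlen
    exact absurd hlen (by simp)
  have hεa0 := sgn_ne hεa
  have hεb0 := sgn_ne hεb
  have hεa2 := sgn_sq hεa
  have hεb2 := sgn_sq hεb
  set A := degL a with hA
  set α := ldegL a with hα
  set B := degL b with hB
  set β := ldegL b with hβ
  have haA : coeff a A ≠ 0 := coeff_deg_ne_zero ha0
  have haα : coeff a α ≠ 0 := coeff_ldeg_ne_zero ha0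
  have hbB : coeff b B ≠ 0 := coeff_deg_ne_zero hb0
  have hbβ : coeff b β ≠ 0 := coeff_ldeg_ne_zero hb0
  -- ca = A + α
  have hca : ca = A + α := by
    have h1 : coeff a (ca - A) ≠ 0 := by
      intro h; rw [ha A, h, mul_zero] at haA; exact haA rfl
    have h2 : coeff a (ca - α) ≠ 0 := by
      intro h; rw [ha α, h, mul_zero] at haα; exact haα rfl
    have := ldegL_le ha0 h1
    have := le_degL ha0 h2
    omega
  have hcb : cb = B + β := by
    have h1 : coeff b (cb - B) ≠ 0 := by
      intro h; rw [hb B, h, mul_zero] at hbB; exact hbB rfl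
    have h2 : coeff b (cb - β) ≠ 0 := by
      intro h; rw [hb β, h, mul_zero] at hbβ; exact hbβ rfl
    have := ldegL_le hb0 h1
    have := le_degL hb0 h2
    omega
  -- length inequality in ℤ
  have hl : B - β < A - α := by
    rw [lenL, if_neg hb0, lenL, if_neg ha0] at hlen
    exact_mod_cast hlen
  set m : ℤ := A - B with hm
  set n : ℤ := α - β with hn
  have hmn : n < m := by omega
  set t : ℂ := coeff a A / coeff b B with ht
  set s : ℂ := coeff a α / coeff b β with hs
  -- leading/trailing coefficient relations
  have haAα : coeff a A = εa * coeff a α := by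
    have := ha A; rwa [show ca - A = α by omega] at this
  have hbBβ : coeff b B = εb * coeff b β := by
    have := hb B; rwa [show cb - B = β by omega] at this
  have hεbinv : εb⁻¹ = εb := (eq_inv_of_mul_eq_one_left hεb2).symm
  have hts : t = εa * εb * s := by
    rw [ht, hs, haAα, hbBβ, mul_div_mul_comm,
      show εa / εb = εa * εb by rw [div_eq_mul_inv, hεbinv]]
  have hst : s = εa * εb * t := by
    rw [hts, ← mul_assoc]
    rw [show εa * εb * (εa * εb) = (εa * εa) * (εb * εb) by ring, hεa2, hεb2]
    ring
  set q : LP := (AddMonoidAlgebra.ofCoeff ((Finsupp.single m t + Finsupp.single n s : ℤ →₀ ℂ)) : LP) with hqdef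
  have hqc : ∀ k : ℤ, coeff q k = (if m = k then t else 0) + (if n = k then s else 0) := by
    intro k
    rw [hqdef]
    show (Finsupp.single m t + Finsupp.single n s : ℤ →₀ ℂ) k = _
    rw [Finsupp.add_apply, Finsupp.single_apply, Finsupp.single_apply]
  have hbq : ∀ k : ℤ, coeff (b * q) k = coeff b (k - m) * t + coeff b (k - n) * s := by
    intro k
    have : b * q = b * (AddMonoidAlgebra.ofCoeff (Finsupp.single m t : ℤ →₀ ℂ) : LP)
        + b * (AddMonoidAlgebra.ofCoeff (Finsupp.single n s : ℤ →₀ ℂ) : LP) := by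
      rw [hqdef, AddMonoidAlgebra.ofCoeff_add, mul_add]
    rw [this]
    simp only [coeff, AddMonoidAlgebra.coeff_add, Finsupp.add_apply, AddMonoidAlgebra.ofCoeff_single,
      AddMonoidAlgebra.coeff_mul_single_apply, sub_eq_add_neg]
  refine ⟨q, ?_, ?_, ?_⟩
  · -- symmetry of q
    intro k
    rw [hqc, hqc]
    have hc' : ca - cb = m + n := by omega
    by_cases hk1 : k = m
    · subst hk1
      rw [if_pos rfl, if_neg (by omega), if_neg (by omega), if_pos (by omega)]
      rw [add_zero, zero_add]; exact hts
    · by_cases hk2 : k = n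
      · subst hk2
        rw [if_neg (by omega), if_pos rfl, if_pos (by omega), if_neg (by omega)]
        rw [zero_add, add_zero]; exact hst
      · rw [if_neg (by omega), if_neg (by omega), if_neg (by omega), if_neg (by omega)]
        ring
  · -- symmetry of a - b*q
    intro k
    rw [coeff_sub, coeff_sub, hbq, hbq]
    rw [ha k]
    have e1 : coeff b (k - m) = εb * coeff b (ca - k - n) := by
      have := hb (k - m); rwa [show cb - (k - m) = ca - k - n by omega] at this
    have e2 : coeff b (k - n) = εb * coeff b (ca - k - m) := by
      have := hb (k - n); rwa [show cb - (k - n) = ca - k - m by omega] at this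
    rw [e1, e2]
    -- need: εa X - (εb Z t + εb Y s) = εa (X - (Y t + Z s)) with εb t = εa s, εb s = εa t
    have f1 : εb * t = εa * s := by
      rw [hts, show εb * (εa * εb * s) = εa * ((εb * εb) * s) by ring, hεb2]; ring
    have f2 : εb * s = εa * t := by
      rw [hst, show εb * (εa * εb * t) = εa * ((εb * εb) * t) by ring, hεb2]; ring
    calc εa * coeff a (ca - k) - (εb * coeff b (ca - k - n) * t + εb * coeff b (ca - k - m) * s)
        = εa * coeff a (ca - k) - ((εb * t) * coeff b (ca - k - n) + (εb * s) * coeff b (ca - k - m)) := by ring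
      _ = εa * coeff a (ca - k) - ((εa * s) * coeff b (ca - k - n) + (εa * t) * coeff b (ca - k - m)) := by rw [f1, f2]
      _ = εa * (coeff a (ca - k) - (coeff b (ca - k - m) * t + coeff b (ca - k - n) * s)) := by ring
  · -- length decreases
    set d : LP := a - b * q with hd
    have hi : ∀ k : ℤ, A ≤ k → coeff d k = 0 := by
      intro k hk
      rw [hd, coeff_sub, hbq]
      rcases eq_or_lt_of_le hk with hk' | hk'
      · rw [← hk']
        have h1 : coeff b (A - n) = 0 := coeff_eq_zero_of_degL_lt (by omega)
        have h2 : coeff b B * t = coeff a A := by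
          rw [ht, mul_div_cancel₀ _ hbB]
        rw [show A - m = B by omega, h1, h2]
        ring
      · have h0 : coeff a k = 0 := coeff_eq_zero_of_degL_lt (by omega)
        have h1 : coeff b (k - m) = 0 := coeff_eq_zero_of_degL_lt (by omega)
        have h2 : coeff b (k - n) = 0 := coeff_eq_zero_of_degL_lt (by omega)
        rw [h0, h1, h2]; ring
    have lo : ∀ k : ℤ, k ≤ α → coeff d k = 0 := by
      intro k hk
      rw [hd, coeff_sub, hbq]
      rcases eq_or_lt_of_le hk with hk' | hk'
      · rw [hk']
        have h1 : coeff b (α - m) = 0 := coeff_eq_zero_of_lt_ldegL (by omega)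
        have h2 : coeff b β * s = coeff a α := by
          rw [hs, mul_div_cancel₀ _ hbβ]
        rw [show α - n = β by omega, h1, h2]
        ring
      · have h0 : coeff a k = 0 := coeff_eq_zero_of_lt_ldegL (by omega)
        have h1 : coeff b (k - m) = 0 := coeff_eq_zero_of_lt_ldegL (by omega)
        have h2 : coeff b (k - n) = 0 := coeff_eq_zero_of_lt_ldegL (by omega)
        rw [h0, h1, h2]; ring
    have h2 : lenL a = ((A - α : ℤ) : WithBot ℤ) := by rw [lenL, if_neg ha0]
    by_cases hd0 : d = 0
    · have h1 : lenL d = ⊥ := by rw [lenL, if_pos hd0]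
      rw [h1, h2]
      exact WithBot.bot_lt_coe _
    · have hdA : degL d < A := by
        by_contra h
        exact coeff_deg_ne_zero hd0 (hi _ (by omega))
      have hdα : α < ldegL d := by
        by_contra h
        exact coeff_ldeg_ne_zero hd0 (lo _ (by omega))
      have hdd : ldegL d ≤ degL d := by
        exact ldegL_le hd0 (coeff_deg_ne_zero hd0)
      have h1 : lenL d = ((degL d - ldegL d : ℤ) : WithBot ℤ) := by rw [lenL, if_neg hd0]
      rw [h1, h2]
      exact_mod_cast (by omega : degL d - ldegL d < A - α)


end QT
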